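/- (Discrete nonlinear Gronwall lemma) Let k > 0, N ∈ ℕ with Nk ≤ T, nonnegative real sequences (w₁ⁿ), (w₂ⁿ), (w₃ⁿ) for n = 0,…,N, nonnegative reals (αⁿ), and A ≥ 0 satisfy w₁^m + k Σ_{n=1}^m w₂ⁿ ≤ A + k Σ_{n=1}^m αⁿ w₁ⁿ + k Σ_{n=1}^{m-1} w₃ⁿ for all m = 1,…,N, with sup_n k αⁿ ≤ 1/2. Assume there exist B ≥ 0, β > 0 with k Σ_{n=1}^{m-1} w₃ⁿ ≤ B · (sup_{n≤m-1} w₁ⁿ)^β · k Σ_{n=1}^{m-1} (w₁ⁿ + w₂ⁿ) for each m. Set E := exp(2k Σ_{n=1}^N αⁿ). If 4AE ≤ (4B(T+1)E)^{-1/β}, then sup_{n=1,…,N} w₁ⁿ + k Σ_{n=1}^N w₂ⁿ ≤ 4AE. -/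

import Mathlib

open Finset

lemma real_biSup_le' {s : Finset ℕ} {f : ℕ → ℝ} {c : ℝ} (hc : 0 ≤ c)
    (h : ∀ n ∈ s, f n ≤ c) : (⨆ n ∈ s, f n) ≤ c := by
  refine Real.iSup_le (fun n => Real.iSup_le (fun hn => h n hn) hc) hc

lemma real_biSup_nonneg' {s : Finset ℕ} {f : ℕ → ℝ} (h : ∀ n ∈ s, 0 ≤ f n) :
    0 ≤ ⨆ n ∈ s, f n :=
  Real.iSup_nonneg fun n => Real.iSup_nonneg fun hn => h n hn

set_option maxHeartbeats 1000000 in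
/-- Discrete nonlinear Gronwall lemma. -/
theorem stmt_7 (T A B β E k : ℝ) (N : ℕ) (hN : 1 ≤ N) (hk : 0 < k) (hNk : N * k ≤ T)
    (hA : 0 ≤ A) (hB : 0 ≤ B) (hβ : 0 < β)
    (w₁ w₂ w₃ α : ℕ → ℝ)
    (hw₁ : ∀ n ≤ N, 0 ≤ w₁ n) (hw₂ : ∀ n ≤ N, 0 ≤ w₂ n)
    (hw₃ : ∀ n ≤ N, 0 ≤ w₃ n) (hα : ∀ n ≤ N, 0 ≤ α n)
    (hαk : ∀ n ∈ Finset.Icc 1 N, k * α n ≤ 1 / 2)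
    (hmain : ∀ m ∈ Finset.Icc 1 N,
      w₁ m + k * ∑ n ∈ Finset.Icc 1 m, w₂ n ≤
        A + k * (∑ n ∈ Finset.Icc 1 m, α n * w₁ n) + k * ∑ n ∈ Finset.Icc 1 (m - 1), w₃ n)
    (hw₃bound : ∀ m ∈ Finset.Icc 1 N,
      k * (∑ n ∈ Finset.Icc 1 (m - 1), w₃ n) ≤
        B * (⨆ n ∈ Finset.Icc 1 (m - 1), w₁ n) ^ β *
          (k * ∑ n ∈ Finset.Icc 1 (m - 1), (w₁ n + w₂ n)))
    (hE : E = Real.exp (2 * k * ∑ n ∈ Finset.Icc 1 N, α n))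
    (hsmall : 4 * A * E ≤ (4 * B * (T + 1) * E) ^ (-(1 / β))) :
    (⨆ n ∈ Finset.Icc 1 N, w₁ n) + k * ∑ n ∈ Finset.Icc 1 N, w₂ n ≤ 4 * A * E := by
  have hE0 : 0 < E := hE ▸ Real.exp_pos _
  have hN1 : (1:ℝ) ≤ N := by exact_mod_cast hN
  have hT0 : 0 < T := lt_of_lt_of_le (by nlinarith) hNk
  have hT1 : 0 < T + 1 := by linarith
  set S : ℕ → ℝ := fun m => 2*A + k * ∑ n ∈ Finset.Icc 1 m, α n * w₁ n with hS
  have hSnn : ∀ m, m ≤ N → 0 ≤ S m := by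
    intro m hm
    have h1 : 0 ≤ ∑ n ∈ Finset.Icc 1 m, α n * w₁ n :=
      Finset.sum_nonneg fun n hn => mul_nonneg (hα n (le_trans (mem_Icc.mp hn).2 hm))
        (hw₁ n (le_trans (mem_Icc.mp hn).2 hm))
    simp only [hS]; nlinarith
  have hexpmono : ∀ j, j ≤ N →
      2*A*Real.exp (2*k*∑ n ∈ Finset.Icc 1 j, α n) ≤ 2*A*E := by
    intro j hj
    have hsum : ∑ n ∈ Finset.Icc 1 j, α n ≤ ∑ n ∈ Finset.Icc 1 N, α n :=
      Finset.sum_le_sum_of_subset_of_nonneg (Finset.Icc_subset_Icc_right hj)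
        (fun i hi _ => hα i (mem_Icc.mp hi).2)
    have := Real.exp_le_exp.mpr (show 2*k*∑ n ∈ Finset.Icc 1 j, α n ≤
        2*k*∑ n ∈ Finset.Icc 1 N, α n by nlinarith)
    rw [hE]
    nlinarith
  have key : ∀ m, 1 ≤ m → m ≤ N →
      (w₁ m + k * ∑ n ∈ Finset.Icc 1 m, w₂ n ≤ S m) ∧
      S m ≤ 2*A*Real.exp (2*k*∑ n ∈ Finset.Icc 1 m, α n) := by
    intro m
    induction m using Nat.strong_induction_on with
    | _ m IH =>
    intro hm1 hmN
    obtain ⟨m', rfl⟩ : ∃ m', m = m' + 1 := ⟨m - 1, by omega⟩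
    have hm'sub : (m' + 1) - 1 = m' := by omega
    -- bounds from induction hypothesis
    have hbound : ∀ j, 1 ≤ j → j ≤ m' → w₁ j + k * ∑ n ∈ Finset.Icc 1 j, w₂ n ≤ 2*A*E := by
      intro j hj1 hjm
      obtain ⟨h1, h2⟩ := IH j (by omega) hj1 (by omega)
      exact h1.trans (h2.trans (hexpmono j (by omega)))
    have hw1b : ∀ j, 1 ≤ j → j ≤ m' → w₁ j ≤ 2*A*E := by
      intro j h1 h2
      have h := hbound j h1 h2
      have h0 : 0 ≤ k * ∑ n ∈ Finset.Icc 1 j, w₂ n :=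
        mul_nonneg hk.le (Finset.sum_nonneg fun n hn => hw₂ n (by
          have := (mem_Icc.mp hn).2; omega))
      linarith
    -- the nonlinear w₃ term is at most A
    have hw3A : k * ∑ n ∈ Finset.Icc 1 m', w₃ n ≤ A := by
      have hsup0 : 0 ≤ (⨆ n ∈ Finset.Icc 1 m', w₁ n) :=
        real_biSup_nonneg' fun n hn => hw₁ n (by have := (mem_Icc.mp hn).2; omega)
      have hsup : (⨆ n ∈ Finset.Icc 1 m', w₁ n) ≤ 4*A*E := by
        refine real_biSup_le' (by positivity) fun n hn => ?_
        have := hw1b n (mem_Icc.mp hn).1 (mem_Icc.mp hn).2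
        nlinarith
      have hw2sum : k * ∑ n ∈ Finset.Icc 1 m', w₂ n ≤ 2*A*E := by
        rcases Nat.eq_zero_or_pos m' with h0 | hpos
        · simp [h0]; positivity
        · have h := hbound m' hpos le_rfl
          have := hw₁ m' (by omega)
          linarith
      have hw1sum : k * ∑ n ∈ Finset.Icc 1 m', w₁ n ≤ T * (2*A*E) := by
        have hle : ∑ n ∈ Finset.Icc 1 m', w₁ n ≤ (m' : ℝ) * (2*A*E) := by
          calc ∑ n ∈ Finset.Icc 1 m', w₁ n ≤ ∑ _n ∈ Finset.Icc 1 m', 2*A*E :=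
                Finset.sum_le_sum fun n hn => hw1b n (mem_Icc.mp hn).1 (mem_Icc.mp hn).2
            _ = (m' : ℝ) * (2*A*E) := by
                rw [Finset.sum_const, Nat.card_Icc]; simp
        have hkm : k * (m' : ℝ) ≤ T := by
          have h1 : (m' : ℝ) ≤ (N : ℝ) := by exact_mod_cast (by omega : m' ≤ N)
          nlinarith
        calc k * ∑ n ∈ Finset.Icc 1 m', w₁ n ≤ k * ((m':ℝ) * (2*A*E)) := by nlinarith
          _ = (k * (m':ℝ)) * (2*A*E) := by ring
          _ ≤ T * (2*A*E) := by nlinarith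
      have hD : k * ∑ n ∈ Finset.Icc 1 m', (w₁ n + w₂ n) ≤ 4*A*E*(T+1) := by
        rw [Finset.sum_add_distrib, mul_add]
        nlinarith
      have hD0 : 0 ≤ k * ∑ n ∈ Finset.Icc 1 m', (w₁ n + w₂ n) := by
        refine mul_nonneg hk.le (Finset.sum_nonneg fun n hn => ?_)
        have hn' := (mem_Icc.mp hn).2
        have := hw₁ n (by omega); have := hw₂ n (by omega); linarith
      have hb := hw₃bound (m'+1) (mem_Icc.mpr ⟨by omega, hmN⟩)
      rw [hm'sub] at hb
      refine hb.trans ?_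
      generalize hWdef : (⨆ n ∈ Finset.Icc 1 m', w₁ n) = W at hsup0 hsup hb ⊢
      generalize hDdef : (k * ∑ n ∈ Finset.Icc 1 m', (w₁ n + w₂ n)) = D at hD hD0 hb ⊢
      rcases eq_or_lt_of_le hB with hB0 | hBpos
      · rw [← hB0]; simpa using hA
      · have hx : (0:ℝ) < 4*B*(T+1)*E := by positivity
        have hpow : (4*A*E)^β ≤ (4*B*(T+1)*E)⁻¹ := by
          calc (4*A*E)^β ≤ ((4*B*(T+1)*E)^(-(1/β)))^β :=
                Real.rpow_le_rpow (by positivity) hsmall hβ.le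
            _ = (4*B*(T+1)*E)^((-(1/β))*β) := (Real.rpow_mul hx.le _ _).symm
            _ = (4*B*(T+1)*E)^(-1:ℝ) := by
                rw [show (-(1/β))*β = (-1:ℝ) by field_simp]
            _ = (4*B*(T+1)*E)⁻¹ := Real.rpow_neg_one _
        have hsupβ : W^β ≤ (4*B*(T+1)*E)⁻¹ :=
          (Real.rpow_le_rpow hsup0 hsup hβ.le).trans hpow
        have hsupβ0 : 0 ≤ W^β := Real.rpow_nonneg hsup0 _
        calc B * W^β * D
            ≤ B * (4*B*(T+1)*E)⁻¹ * (4*A*E*(T+1)) := by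
              have h1 : B * W^β ≤ B * (4*B*(T+1)*E)⁻¹ :=
                mul_le_mul_of_nonneg_left hsupβ hB
              have h2 : 0 ≤ B * (4*B*(T+1)*E)⁻¹ := by positivity
              exact mul_le_mul h1 hD hD0 h2
          _ = A := by field_simp
    -- linear part
    have hmain' := hmain (m'+1) (mem_Icc.mpr ⟨by omega, hmN⟩)
    rw [hm'sub] at hmain'
    have hstep1 : w₁ (m'+1) + k * ∑ n ∈ Finset.Icc 1 (m'+1), w₂ n ≤ S (m'+1) := by
      simp only [hS]; linarith
    refine ⟨hstep1, ?_⟩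
    have hw2m : 0 ≤ k * ∑ n ∈ Finset.Icc 1 (m'+1), w₂ n :=
      mul_nonneg hk.le (Finset.sum_nonneg fun n hn => hw₂ n (by
        have := (mem_Icc.mp hn).2; omega))
    have hw1m : w₁ (m'+1) ≤ S (m'+1) := by linarith
    have hsplit : S (m'+1) = S m' + k * (α (m'+1) * w₁ (m'+1)) := by
      simp only [hS]
      rw [Finset.sum_Icc_succ_top (by omega : 1 ≤ m'+1)]
      ring
    have hprev : S m' ≤ 2*A*Real.exp (2*k*∑ n ∈ Finset.Icc 1 m', α n) := by
      rcases Nat.eq_zero_or_pos m' with h0 | hpos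
      · subst h0; simp [hS]
      · exact (IH m' (by omega) hpos (by omega)).2
    have hαm := hαk (m'+1) (mem_Icc.mpr ⟨by omega, hmN⟩)
    have hαnn := hα (m'+1) hmN
    have hS0 : 0 ≤ S m' := hSnn m' (by omega)
    have hSm : 0 ≤ S (m'+1) := hSnn _ hmN
    have hx0 : 0 ≤ k * α (m'+1) := mul_nonneg hk.le hαnn
    have h1 : S (m'+1) ≤ S m' + (k * α (m'+1)) * S (m'+1) := by
      rw [hsplit]; nlinarith
    have h2 : S (m'+1) ≤ (1 + 2*(k*α (m'+1))) * S m' := by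
      nlinarith [mul_le_mul_of_nonneg_left h1 (show (0:ℝ) ≤ 1+2*(k*α (m'+1)) by linarith),
        mul_nonneg (mul_nonneg hx0 (show (0:ℝ) ≤ 1-2*(k*α (m'+1)) by linarith)) hSm]
    have h3 : (1 + 2*(k*α (m'+1))) ≤ Real.exp (2*(k*α (m'+1))) := by
      have := Real.add_one_le_exp (2*(k*α (m'+1))); linarith
    calc S (m'+1) ≤ (1 + 2*(k*α (m'+1))) * S m' := h2
      _ ≤ Real.exp (2*(k*α (m'+1))) * (2*A*Real.exp (2*k*∑ n ∈ Finset.Icc 1 m', α n)) := by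
          apply mul_le_mul h3 hprev hS0 (Real.exp_pos _).le
      _ = 2*A*Real.exp (2*k*∑ n ∈ Finset.Icc 1 (m'+1), α n) := by
          rw [Finset.sum_Icc_succ_top (by omega : 1 ≤ m'+1), mul_add, Real.exp_add]
          ring
  -- conclude
  have hfin : ∀ j, 1 ≤ j → j ≤ N → w₁ j + k * ∑ n ∈ Finset.Icc 1 j, w₂ n ≤ 2*A*E := by
    intro j h1 h2
    obtain ⟨ha, hb⟩ := key j h1 h2
    exact ha.trans (hb.trans (hexpmono j h2))
  have hsupN : (⨆ n ∈ Finset.Icc 1 N, w₁ n) ≤ 2*A*E := by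
    refine real_biSup_le' (by positivity) fun n hn => ?_
    have h := hfin n (mem_Icc.mp hn).1 (mem_Icc.mp hn).2
    have h0 : 0 ≤ k * ∑ i ∈ Finset.Icc 1 n, w₂ i :=
      mul_nonneg hk.le (Finset.sum_nonneg fun i hi => hw₂ i
        (le_trans (mem_Icc.mp hi).2 (mem_Icc.mp hn).2))
    linarith
  have hw2N : k * ∑ n ∈ Finset.Icc 1 N, w₂ n ≤ 2*A*E := by
    have h := hfin N hN le_rfl
    have := hw₁ N le_rfl
    linarith
  linarith
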